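/- arXiv:0803.1978 — 4 statements merged into one kernel-verified Lean document; each statement's English description precedes it below -/
import Mathlib

section
/- Let V be a real Hilbert space, let A : V → V be a continuous linear operator that is coercive (⟪A u, u⟫ ≥ m‖u‖² for some m > 0 and all u ∈ V), and let B : V → V be a monotone map (⟪B x − B y, x − y⟫ ≥ 0 for all x, y) that is Lipschitz continuous with some constant L ≥ 0. Then for every f ∈ V and every φ ∈ V there exists a unique y ∈ V such that A y + B(y − φ) = f. (Abstract well-posedness of the penalized semilinear equation (3.2).) -/
set_option maxHeartbeats 1000000


/-- Well-posedness of the penalized semilinear equation `A y + B (y - φ) = f`: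
`A` continuous linear and coercive, `B` monotone and Lipschitz. -/
theorem penalized_equation_wellposed
    {V : Type*} [NormedAddCommGroup V] [InnerProductSpace ℝ V] [CompleteSpace V]
    (A : V →L[ℝ] V)
    (m : ℝ) (hm : 0 < m) (hcoer : ∀ u : V, (inner ℝ (A u) u : ℝ) ≥ m * ‖u‖ ^ 2)
    (B : V → V)
    (hmono : ∀ x y : V, (inner ℝ (B x - B y) (x - y) : ℝ) ≥ 0)
    (L : ℝ) (hL : 0 ≤ L) (hlip : ∀ x y : V, ‖B x - B y‖ ≤ L * ‖x - y‖) :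
    ∀ f φ : V, ∃! y : V, A y + B (y - φ) = f := by
  intro f φ
  -- uniqueness (from coercivity and monotonicity)
  have uniq : ∀ x y : V, A x + B (x - φ) = f → A y + B (y - φ) = f → x = y := by
    intro x y hx hy
    have heq : A x + B (x - φ) = A y + B (y - φ) := hx.trans hy.symm
    have h1 : A (x - y) + (B (x - φ) - B (y - φ)) = 0 := by
      rw [map_sub, ← sub_eq_zero.mpr heq]; abel
    have h2 : (inner ℝ (A (x - y) + (B (x - φ) - B (y - φ))) (x - y) : ℝ) = 0 := by
      rw [h1, inner_zero_left]
    rw [inner_add_left] at h2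
    have h3 : (inner ℝ (B (x - φ) - B (y - φ)) ((x - φ) - (y - φ)) : ℝ) ≥ 0 := hmono _ _
    have h4 : (x - φ) - (y - φ) = x - y := by abel
    rw [h4] at h3
    have h5 := hcoer (x - y)
    have h6 : ‖x - y‖ ^ 2 ≤ 0 := by nlinarith
    have h7 : ‖x - y‖ ^ 2 = 0 := le_antisymm h6 (sq_nonneg _)
    have h8 : ‖x - y‖ = 0 := by
      have := pow_eq_zero_iff (n := 2) (by norm_num) |>.mp h7
      exact this
    exact sub_eq_zero.mp (norm_eq_zero.mp h8)
  -- existence via Banach fixed point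
  set C : ℝ := ‖A‖ + L + m with hC
  have hC0 : 0 < C := by positivity
  have hmC : m ≤ C := by
    have := norm_nonneg A; linarith
  set ρ : ℝ := m / C ^ 2 with hρdef
  have hρ : 0 < ρ := by positivity
  set T : V → V := fun y => y - ρ • (A y + B (y - φ) - f) with hT
  set k : ℝ := Real.sqrt (1 - m ^ 2 / C ^ 2) with hk
  have hsq : 0 ≤ 1 - m ^ 2 / C ^ 2 := by
    have : m ^ 2 ≤ C ^ 2 := by nlinarith
    have h2 : m ^ 2 / C ^ 2 ≤ 1 := by
      rw [div_le_one (by positivity)]; exact this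
    linarith
  have hk1 : k < 1 := by
    have : 1 - m ^ 2 / C ^ 2 < 1 := by
      have : 0 < m ^ 2 / C ^ 2 := by positivity
      linarith
    calc k < Real.sqrt 1 := Real.sqrt_lt_sqrt hsq this
      _ = 1 := Real.sqrt_one
  have key : ∀ x y : V, ‖T x - T y‖ ≤ k * ‖x - y‖ := by
    intro x y
    set e : V := x - y with he
    set g : V := A e + (B (x - φ) - B (y - φ)) with hg
    have hTd : T x - T y = e - ρ • g := by
      simp only [hT, hg, he, map_sub, smul_sub, smul_add]
      abel
    have hgn : ‖g‖ ≤ C * ‖e‖ := by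
      have h1 : ‖A e‖ ≤ ‖A‖ * ‖e‖ := A.le_opNorm e
      have h2 : ‖B (x - φ) - B (y - φ)‖ ≤ L * ‖(x - φ) - (y - φ)‖ := hlip _ _
      have h3 : (x - φ) - (y - φ) = e := by rw [he]; abel
      rw [h3] at h2
      calc ‖g‖ ≤ ‖A e‖ + ‖B (x - φ) - B (y - φ)‖ := norm_add_le _ _
        _ ≤ ‖A‖ * ‖e‖ + L * ‖e‖ := add_le_add h1 h2
        _ ≤ C * ‖e‖ := by nlinarith [norm_nonneg e]
    have hge : (inner ℝ g e : ℝ) ≥ m * ‖e‖ ^ 2 := by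
      have h3 : (x - φ) - (y - φ) = e := by rw [he]; abel
      have := hmono (x - φ) (y - φ)
      rw [h3] at this
      have := hcoer e
      rw [hg, inner_add_left]
      linarith
    have expand : ‖e - ρ • g‖ ^ 2 = ‖e‖ ^ 2 - 2 * ρ * (inner ℝ e g : ℝ) + ρ ^ 2 * ‖g‖ ^ 2 := by
      rw [norm_sub_sq_real, real_inner_smul_right, norm_smul]
      simp [abs_of_pos hρ]
      ring
    have hbound : ‖T x - T y‖ ^ 2 ≤ (1 - m ^ 2 / C ^ 2) * ‖e‖ ^ 2 := by
      rw [hTd, expand, real_inner_comm]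
      have hρC : ρ ^ 2 * ‖g‖ ^ 2 ≤ ρ ^ 2 * (C ^ 2 * ‖e‖ ^ 2) := by
        have : ‖g‖ ^ 2 ≤ C ^ 2 * ‖e‖ ^ 2 := by nlinarith [norm_nonneg g, norm_nonneg e]
        nlinarith [sq_nonneg ρ]
      have hρeq : ρ = m / C ^ 2 := hρdef
      have hC2 : (0:ℝ) < C ^ 2 := by positivity
      have hprod : ρ ^ 2 * C ^ 2 = m ^ 2 / C ^ 2 := by
        rw [hρeq]; field_simp
      have e1 : 2 * ρ * (m * ‖e‖ ^ 2) ≤ 2 * ρ * (inner ℝ g e : ℝ) :=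
        mul_le_mul_of_nonneg_left hge (by positivity)
      have e1' : 2 * (m ^ 2 / C ^ 2) * ‖e‖ ^ 2 = 2 * ρ * (m * ‖e‖ ^ 2) := by
        rw [hρeq]; ring
      have e2 : ρ ^ 2 * ‖g‖ ^ 2 ≤ m ^ 2 / C ^ 2 * ‖e‖ ^ 2 := by
        calc ρ ^ 2 * ‖g‖ ^ 2 ≤ ρ ^ 2 * (C ^ 2 * ‖e‖ ^ 2) := hρC
          _ = ρ ^ 2 * C ^ 2 * ‖e‖ ^ 2 := by ring
          _ = m ^ 2 / C ^ 2 * ‖e‖ ^ 2 := by rw [hprod]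
      linarith [e1, e1', e2]
    have h0 : 0 ≤ k * ‖e‖ := mul_nonneg (Real.sqrt_nonneg _) (norm_nonneg _)
    have : ‖T x - T y‖ ^ 2 ≤ (k * ‖e‖) ^ 2 := by
      have : (k * ‖e‖) ^ 2 = (1 - m ^ 2 / C ^ 2) * ‖e‖ ^ 2 := by
        rw [mul_pow, hk, Real.sq_sqrt hsq]
      linarith [hbound, this.ge]
    calc ‖T x - T y‖ = Real.sqrt (‖T x - T y‖ ^ 2) := (Real.sqrt_sq (norm_nonneg _)).symm
      _ ≤ Real.sqrt ((k * ‖e‖) ^ 2) := Real.sqrt_le_sqrt this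
      _ = k * ‖e‖ := Real.sqrt_sq h0
  have hK : ContractingWith ⟨k, Real.sqrt_nonneg _⟩ T := by
    constructor
    · exact_mod_cast hk1
    · apply LipschitzWith.of_dist_le_mul
      intro x y
      rw [dist_eq_norm, dist_eq_norm]
      exact_mod_cast key x y
  obtain ⟨y, hy⟩ := hK.exists_fixedPoint (0 : V) (by
    apply edist_ne_top)
  have hfix : T y = y := hy.1
  have heq : A y + B (y - φ) = f := by
    have : ρ • (A y + B (y - φ) - f) = 0 := by
      have := hfix
      simp only [hT] at this
      have h2 : y - ρ • (A y + B (y - φ) - f) = y := this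
      have := sub_eq_self.mp h2
      exact this
    have h3 : A y + B (y - φ) - f = 0 := by
      rcases smul_eq_zero.mp this with h | h
      · exact absurd h (ne_of_gt hρ)
      · exact h
    exact sub_eq_zero.mp h3
  exact ⟨y, heq, fun z hz => uniq z y hz heq⟩
end

section
/- Let V be a real Hilbert space, let a : V × V → ℝ be a continuous bilinear form that is coercive with constant m > 0 (a(u,u) ≥ m‖u‖² for all u), let δ > 0, and let B : V → V be a monotone map that is Lipschitz continuous with constant 1/δ. Fix f ∈ V. If y₁, y₂, φ₁, φ₂ ∈ V satisfy a(yᵢ, v) + ⟪B(yᵢ − φᵢ), v⟫ = ⟪f, v⟫ for all v ∈ V (i = 1, 2), then ‖y₂ − y₁‖ ≤ max{1, 2/(m δ)} ‖φ₂ − φ₁‖. (Theorem 3.1: Lipschitz dependence of the penalized state on the obstacle, with constant L_δ = max{1, 2/(mδ)}.) -/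
/-- Theorem 3.1: Lipschitz dependence of the penalized state on the obstacle,
with constant `L_δ = max {1, 2/(m δ)}`. -/
theorem penalized_state_lipschitz_in_obstacle
    {V : Type*} [NormedAddCommGroup V] [InnerProductSpace ℝ V] [CompleteSpace V]
    (a : V →ₗ[ℝ] V →ₗ[ℝ] ℝ)
    (M : ℝ) (hM : 0 < M) (hcont : ∀ u v : V, |a u v| ≤ M * ‖u‖ * ‖v‖)
    (m : ℝ) (hm : 0 < m) (hcoer : ∀ u : V, a u u ≥ m * ‖u‖ ^ 2)
    (δ : ℝ) (hδ : 0 < δ)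
    (B : V → V)
    (hmono : ∀ x y : V, (inner ℝ (B x - B y) (x - y) : ℝ) ≥ 0)
    (hlip : ∀ x y : V, ‖B x - B y‖ ≤ (1 / δ) * ‖x - y‖)
    (f : V) (y₁ y₂ φ₁ φ₂ : V)
    (h1 : ∀ v : V, a y₁ v + (inner ℝ (B (y₁ - φ₁)) v : ℝ) = (inner ℝ f v : ℝ))
    (h2 : ∀ v : V, a y₂ v + (inner ℝ (B (y₂ - φ₂)) v : ℝ) = (inner ℝ f v : ℝ)) :
    ‖y₂ - y₁‖ ≤ max 1 (2 / (m * δ)) * ‖φ₂ - φ₁‖ := by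
  set e := y₂ - y₁ with he
  set ψ := φ₂ - φ₁ with hψ
  set x₁ := y₁ - φ₁ with hx1
  set x₂ := y₂ - φ₂ with hx2
  -- subtract the equations tested at v = e
  have heq : a e e + (inner ℝ (B x₂ - B x₁) e : ℝ) = 0 := by
    have e1 := h1 e
    have e2 := h2 e
    have hae : a e e = a y₂ e - a y₁ e := by
      rw [he, map_sub a y₂ y₁, LinearMap.sub_apply]
    have hin : (inner ℝ (B x₂ - B x₁) e : ℝ)
        = (inner ℝ (B x₂) e : ℝ) - (inner ℝ (B x₁) e : ℝ) := by
      rw [inner_sub_left]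
    linarith
  -- split e = (x₂ - x₁) + ψ
  have hsplit : x₂ - x₁ + ψ = e := by
    rw [hx1, hx2, hψ, he]; abel
  have hinner : (inner ℝ (B x₂ - B x₁) e : ℝ)
      = (inner ℝ (B x₂ - B x₁) (x₂ - x₁) : ℝ) + (inner ℝ (B x₂ - B x₁) ψ : ℝ) := by
    rw [← hsplit, inner_add_right]
  have hmono' := hmono x₂ x₁
  have h1' : m * ‖e‖ ^ 2 ≤ a e e := hcoer e
  have h2' : a e e ≤ -(inner ℝ (B x₂ - B x₁) ψ : ℝ) := by
    linarith [heq, hinner, hmono']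
  have h3' : -(inner ℝ (B x₂ - B x₁) ψ : ℝ) ≤ ‖B x₂ - B x₁‖ * ‖ψ‖ := by
    have h := abs_real_inner_le_norm (B x₂ - B x₁) ψ
    have h' := neg_abs_le ((inner ℝ (B x₂ - B x₁) ψ : ℝ))
    linarith
  have h4' : ‖B x₂ - B x₁‖ * ‖ψ‖ ≤ (1 / δ) * (‖e‖ + ‖ψ‖) * ‖ψ‖ := by
    have hl := hlip x₂ x₁
    have hx : ‖x₂ - x₁‖ ≤ ‖e‖ + ‖ψ‖ := by
      have hd : x₂ - x₁ = e - ψ := by rw [← hsplit]; abel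
      rw [hd]; exact norm_sub_le e ψ
    have hψn : (0:ℝ) ≤ ‖ψ‖ := norm_nonneg _
    have hb : ‖B x₂ - B x₁‖ ≤ (1 / δ) * (‖e‖ + ‖ψ‖) := by
      refine hl.trans ?_
      have := mul_le_mul_of_nonneg_left hx (le_of_lt (by positivity : (0:ℝ) < 1/δ))
      linarith
    exact mul_le_mul_of_nonneg_right hb hψn
  have key : m * ‖e‖ ^ 2 ≤ (1 / δ) * (‖e‖ + ‖ψ‖) * ‖ψ‖ := by linarith
  -- final algebra
  set t := ‖e‖ with ht
  set s := ‖ψ‖ with hs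
  have htn : 0 ≤ t := norm_nonneg _
  have hsn : 0 ≤ s := norm_nonneg _
  set L := max 1 (2 / (m * δ)) with hL
  have hL1 : (1:ℝ) ≤ L := le_max_left _ _
  have hL2 : 2 / (m * δ) ≤ L := le_max_right _ _
  have hmδ : 0 < m * δ := mul_pos hm hδ
  have hL2' : 2 ≤ L * (m * δ) := by
    rw [div_le_iff₀ hmδ] at hL2; linarith
  by_contra hcon
  push_neg at hcon
  have hδinv : δ * (1 / δ) = 1 := by field_simp
  have hkey' : m * δ * t ^ 2 ≤ (t + s) * s := by
    calc m * δ * t ^ 2 = δ * (m * t ^ 2) := by ring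
      _ ≤ δ * (1 / δ * (t + s) * s) := mul_le_mul_of_nonneg_left key hδ.le
      _ = (t + s) * s := by field_simp
  have hLs : s ≤ L * s := le_mul_of_one_le_left hsn hL1
  have hst : s ≤ t := by linarith
  have htpos : 0 < t := by
    have : 0 ≤ L * s := mul_nonneg (by linarith) hsn
    linarith
  nlinarith [hkey', hL2', mul_nonneg htn hsn, mul_nonneg hsn hsn,
    mul_lt_mul_of_pos_left hcon (mul_pos hmδ htpos),
    mul_le_mul_of_nonneg_left hst hsn]
end

section
/- Let V be a real Hilbert space, let a : V × V → ℝ be a bilinear form that is continuous with constant M > 0 (|a(u,v)| ≤ M‖u‖‖v‖) and coercive with constant m > 0 (a(u,u) ≥ m‖u‖²), and let B : V → V be a monotone map with B(0) = 0. If f, φ ∈ V and y ∈ V satisfies a(y, v) + ⟪B(y − φ), v⟫ = ⟪f, v⟫ for all v ∈ V, then ‖y‖ ≤ max{1, (M + 2)/m} (‖φ‖ + ‖f‖). (Abstract form of the a priori estimate (3.3): the penalized states are bounded in terms of the obstacle and the source term, uniformly in the penalization parameter.) -/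
/-- Abstract form of the a priori estimate (3.3): the penalized state is bounded
in terms of the obstacle and the source term, uniformly in the penalization. -/
theorem penalized_state_apriori_bound
    {V : Type*} [NormedAddCommGroup V] [InnerProductSpace ℝ V] [CompleteSpace V]
    (a : V →ₗ[ℝ] V →ₗ[ℝ] ℝ)
    (M : ℝ) (hM : 0 < M) (hcont : ∀ u v : V, |a u v| ≤ M * ‖u‖ * ‖v‖)
    (m : ℝ) (hm : 0 < m) (hcoer : ∀ u : V, a u u ≥ m * ‖u‖ ^ 2)
    (B : V → V)
    (hmono : ∀ x y : V, (inner ℝ (B x - B y) (x - y) : ℝ) ≥ 0)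
    (hB0 : B 0 = 0)
    (f φ y : V)
    (hy : ∀ v : V, a y v + (inner ℝ (B (y - φ)) v : ℝ) = (inner ℝ f v : ℝ)) :
    ‖y‖ ≤ max 1 ((M + 2) / m) * (‖φ‖ + ‖f‖) := by
  set t := ‖y‖ with ht
  set p := ‖φ‖ with hp
  set F := ‖f‖ with hF
  set C := max 1 ((M + 2) / m) with hC
  have hBpos : (0:ℝ) ≤ (inner ℝ (B (y - φ)) (y - φ) : ℝ) := by
    have := hmono (y - φ) 0
    simpa [hB0] using this
  have hkey := hy (y - φ)
  have h1 : a y (y - φ) ≤ ‖f‖ * ‖y - φ‖ := by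
    have hin : (inner ℝ f (y - φ) : ℝ) ≤ ‖f‖ * ‖y - φ‖ := real_inner_le_norm f (y - φ)
    linarith
  have h2 : a y y = a y (y - φ) + a y φ := by
    have : a y (y - φ) = a y y - a y φ := by simp [map_sub]
    linarith
  have h3 : a y φ ≤ M * t * p := by
    have := hcont y φ
    have := abs_le.mp this
    linarith [(abs_le.mp (hcont y φ)).2]
  have htri : ‖y - φ‖ ≤ t + p := norm_sub_le y φ
  have hFnn : (0:ℝ) ≤ F := norm_nonneg f
  have hquad : m * t ^ 2 ≤ F * (t + p) + M * t * p := by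
    have h4 : a y y ≤ F * ‖y - φ‖ + M * t * p := by linarith
    have h5 : F * ‖y - φ‖ ≤ F * (t + p) := by
      exact mul_le_mul_of_nonneg_left htri hFnn
    have := hcoer y
    linarith
  have htnn : (0:ℝ) ≤ t := norm_nonneg y
  have hpnn : (0:ℝ) ≤ p := norm_nonneg φ
  have hC1 : (1:ℝ) ≤ C := le_max_left _ _
  have hCm : M + 2 ≤ m * C := by
    have : (M + 2) / m ≤ C := le_max_right _ _
    calc M + 2 = m * ((M + 2) / m) := by field_simp
    _ ≤ m * C := by nlinarith
  by_contra hcon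
  push_neg at hcon
  have hst : p + F < t := by nlinarith
  have htpos : 0 < t := lt_of_le_of_lt (by positivity) hst
  nlinarith [mul_lt_mul_of_pos_left hcon (mul_pos hm htpos),
    mul_le_mul_of_nonneg_right hCm (mul_nonneg (add_nonneg hpnn hFnn) htnn),
    mul_le_mul_of_nonneg_left (le_of_lt hst) hFnn,
    mul_nonneg (mul_nonneg hM.le htnn) hFnn]
end

section
/- Let V be a real Hilbert space, let a : V × V → ℝ be a continuous bilinear form that is coercive (a(u,u) ≥ m‖u‖² for some m > 0), and let f ∈ V. Suppose (y_k) converges weakly to y in V, (v_k) converges strongly (in norm) to v in V, and for every k one has a(y_k, v_k − y_k) ≥ ⟪f, v_k − y_k⟫. Then a(y, v − y) ≥ ⟪f, v − y⟫. (Abstract Minty-type passage to the limit in the variational inequality, the key step in the proofs of Theorems 3.2 and 3.3.) -/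
open Filter

/-- Abstract Minty-type passage to the limit in the variational inequality. -/
theorem minty_passage_to_limit
    {V : Type*} [NormedAddCommGroup V] [InnerProductSpace ℝ V] [CompleteSpace V]
    (a : V →ₗ[ℝ] V →ₗ[ℝ] ℝ)
    (M : ℝ) (hM : 0 < M) (hcont : ∀ u v : V, |a u v| ≤ M * ‖u‖ * ‖v‖)
    (m : ℝ) (hm : 0 < m) (hcoer : ∀ u : V, a u u ≥ m * ‖u‖ ^ 2)
    (f : V) (y : ℕ → V) (ylim : V) (v : ℕ → V) (vlim : V)
    (hweak : ∀ z : V, Tendsto (fun k => (inner ℝ (y k) z : ℝ)) atTop (nhds (inner ℝ ylim z : ℝ)))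
    (hstrong : Tendsto (fun k => ‖v k - vlim‖) atTop (nhds 0))
    (hineq : ∀ k, a (y k) (v k - y k) ≥ (inner ℝ f (v k - y k) : ℝ)) :
    a ylim (vlim - ylim) ≥ (inner ℝ f (vlim - ylim) : ℝ) := by
  -- Step 1: weak convergence tested against any continuous linear functional
  have hweak' : ∀ (φ : V →L[ℝ] ℝ),
      Tendsto (fun k => φ (y k)) atTop (nhds (φ ylim)) := by
    intro φ
    set w := (InnerProductSpace.toDual ℝ V).symm φ with hw
    have hφ : ∀ x : V, φ x = (inner ℝ x w : ℝ) := by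
      intro x
      rw [← InnerProductSpace.toDual_symm_apply (y := φ) (x := x), real_inner_comm]
    simp only [hφ]
    exact hweak w
  -- Step 2: boundedness of (y k) via Banach–Steinhaus
  obtain ⟨C, hC⟩ : ∃ C, ∀ k, ‖y k‖ ≤ C := by
    set g : ℕ → V →L[ℝ] ℝ := fun k => InnerProductSpace.toDualMap ℝ V (y k) with hg
    have h1 : ∀ x : V, ∃ C, ∀ k, ‖g k x‖ ≤ C := by
      intro x
      have : Tendsto (fun k => ‖(inner ℝ (y k) x : ℝ)‖) atTop (nhds ‖(inner ℝ ylim x : ℝ)‖) :=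
        (hweak x).norm
      obtain ⟨C, hC⟩ := this.bddAbove_range
      exact ⟨C, fun k => hC ⟨k, rfl⟩⟩
    obtain ⟨C', hC'⟩ := banach_steinhaus h1
    refine ⟨C', fun k => ?_⟩
    have := (InnerProductSpace.toDualMap ℝ V).norm_map (y k)
    rw [← this]
    exact hC' k
  have hC0 : 0 ≤ C := le_trans (norm_nonneg _) (hC 0)
  -- continuous versions of the partial maps of a
  have mkright : ∀ u : V, ∃ φ : V →L[ℝ] ℝ, ∀ x, φ x = a u x := by
    intro u
    refine ⟨LinearMap.mkContinuous (a u) (M * ‖u‖) (fun x => ?_), fun x => rfl⟩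
    calc ‖a u x‖ = |a u x| := rfl
      _ ≤ M * ‖u‖ * ‖x‖ := hcont u x
  have mkleft : ∀ z : V, ∃ φ : V →L[ℝ] ℝ, ∀ x, φ x = a x z := by
    intro z
    refine ⟨LinearMap.mkContinuous (a.flip z) (M * ‖z‖) (fun x => ?_), fun x => rfl⟩
    have := hcont x z
    calc ‖(a.flip z) x‖ = |a x z| := rfl
      _ ≤ M * ‖x‖ * ‖z‖ := hcont x z
      _ = M * ‖z‖ * ‖x‖ := by ring
  -- Step 3: limits of the individual terms
  -- (a) a (y k) vlim → a ylim vlim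
  obtain ⟨φv, hφv⟩ := mkleft vlim
  have T1 : Tendsto (fun k => a (y k) vlim) atTop (nhds (a ylim vlim)) := by
    have := hweak' φv
    simpa only [hφv] using this
  -- (b) a (y k) (v k - vlim) → 0
  have T2 : Tendsto (fun k => a (y k) (v k - vlim)) atTop (nhds 0) := by
    have hb : ∀ k, ‖a (y k) (v k - vlim)‖ ≤ M * C * ‖v k - vlim‖ := by
      intro k
      calc ‖a (y k) (v k - vlim)‖ = |a (y k) (v k - vlim)| := rfl
        _ ≤ M * ‖y k‖ * ‖v k - vlim‖ := hcont _ _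
        _ ≤ M * C * ‖v k - vlim‖ := by
            have h2 : (0:ℝ) ≤ ‖v k - vlim‖ := norm_nonneg _
            exact mul_le_mul_of_nonneg_right
              (mul_le_mul_of_nonneg_left (hC k) hM.le) h2
    exact squeeze_zero_norm hb (by simpa using hstrong.const_mul (M * C))
  -- (c) a ylim (y k - ylim) → 0
  obtain ⟨φy, hφy⟩ := mkright ylim
  have T3 : Tendsto (fun k => a ylim (y k - ylim)) atTop (nhds 0) := by
    have h := (hweak' φy).sub_const (φy ylim)
    have : (fun k => φy (y k) - φy ylim) = fun k => a ylim (y k - ylim) := by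
      funext k; rw [hφy, hφy, map_sub]
    rw [this] at h
    simpa using h
  -- (d) a (y k - ylim) ylim → 0
  obtain ⟨ψy, hψy⟩ := mkleft ylim
  have T4 : Tendsto (fun k => a (y k - ylim) ylim) atTop (nhds 0) := by
    have h := (hweak' ψy).sub_const (ψy ylim)
    have : (fun k => ψy (y k) - ψy ylim) = fun k => a (y k - ylim) ylim := by
      funext k; rw [hψy, hψy, map_sub, LinearMap.sub_apply]
    rw [this] at h
    simpa using h
  -- (e) inner f (v k - y k) → inner f (vlim - ylim)
  have T5 : Tendsto (fun k => (inner ℝ f (v k - y k) : ℝ)) atTop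
      (nhds (inner ℝ f (vlim - ylim) : ℝ)) := by
    have h1 : Tendsto (fun k => (inner ℝ f (v k - vlim) : ℝ)) atTop (nhds 0) := by
      have hb : ∀ k, ‖(inner ℝ f (v k - vlim) : ℝ)‖ ≤ ‖f‖ * ‖v k - vlim‖ :=
        fun k => norm_inner_le_norm _ _
      exact squeeze_zero_norm hb (by simpa using hstrong.const_mul ‖f‖)
    have h2 : Tendsto (fun k => (inner ℝ f (y k) : ℝ)) atTop (nhds (inner ℝ f ylim : ℝ)) := by
      have := hweak f
      simpa only [real_inner_comm] using this
    have h3 : Tendsto (fun k => (inner ℝ f (v k - vlim) : ℝ) + (inner ℝ f vlim : ℝ)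
        - (inner ℝ f (y k) : ℝ)) atTop (nhds (0 + (inner ℝ f vlim : ℝ) - (inner ℝ f ylim : ℝ))) :=
      ((h1.add tendsto_const_nhds).sub h2)
    have heq : (fun k => (inner ℝ f (v k - vlim) : ℝ) + (inner ℝ f vlim : ℝ)
        - (inner ℝ f (y k) : ℝ)) = fun k => (inner ℝ f (v k - y k) : ℝ) := by
      funext k; rw [inner_sub_right, inner_sub_right]; ring
    rw [heq] at h3
    have heq2 : (0:ℝ) + (inner ℝ f vlim : ℝ) - (inner ℝ f ylim : ℝ)
        = (inner ℝ f (vlim - ylim) : ℝ) := by rw [inner_sub_right]; ring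
    rwa [heq2] at h3
  -- Step 4: the per-k inequality
  -- F k := a (y k) vlim + a (y k) (v k - vlim) - a ylim (y k - ylim) - a (y k - ylim) ylim
  --        - inner f (v k - y k)   ≥ a ylim ylim
  have key : ∀ k, a ylim ylim ≤ a (y k) vlim + a (y k) (v k - vlim)
      - a ylim (y k - ylim) - a (y k - ylim) ylim - (inner ℝ f (v k - y k) : ℝ) := by
    intro k
    have h1 := hineq k
    have hdd : a (y k - ylim) (y k - ylim) ≥ 0 := by
      have := hcoer (y k - ylim)
      nlinarith [sq_nonneg ‖y k - ylim‖]
    -- expand everything in terms of a applied to y k, ylim, v k, vlim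
    have e1 : a (y k) (v k - y k) = a (y k) (v k) - a (y k) (y k) := by rw [map_sub]
    have e2 : a (y k) (v k) = a (y k) vlim + a (y k) (v k - vlim) := by
      rw [map_sub]; ring
    have e3 : a (y k - ylim) (y k - ylim)
        = a (y k) (y k) - a (y k) ylim - a ylim (y k) + a ylim ylim := by
      simp only [map_sub, LinearMap.sub_apply]; ring
    have e4 : a ylim (y k - ylim) = a ylim (y k) - a ylim ylim := by rw [map_sub]
    have e5 : a (y k - ylim) ylim = a (y k) ylim - a ylim ylim := by
      simp only [map_sub, LinearMap.sub_apply]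
    nlinarith [h1, hdd]
  -- Step 5: pass to the limit
  have Tlim : Tendsto (fun k => a (y k) vlim + a (y k) (v k - vlim)
      - a ylim (y k - ylim) - a (y k - ylim) ylim - (inner ℝ f (v k - y k) : ℝ)) atTop
      (nhds (a ylim vlim + 0 - 0 - 0 - (inner ℝ f (vlim - ylim) : ℝ))) :=
    (((T1.add T2).sub T3).sub T4).sub T5
  have hfin : a ylim ylim ≤ a ylim vlim + 0 - 0 - 0 - (inner ℝ f (vlim - ylim) : ℝ) :=
    le_of_tendsto_of_tendsto' tendsto_const_nhds Tlim key
  have : a ylim (vlim - ylim) = a ylim vlim - a ylim ylim := by rw [map_sub]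
  linarith
end
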